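/- For real k ≥ 4, the Mahler measure of P = k − z − z⁻¹ − w − w⁻¹ equals log k − Σ_{n=1}^∞ C(2n,n)² k^{-2n}/(2n). -/

import Mathlib

open MeasureTheory

/-- The Mahler measure of a function of two complex variables. -/
noncomputable def mahlerMeasure2 (P : ℂ → ℂ → ℂ) : ℝ :=
  ∫ θ in Set.Ioc (0:ℝ) 1 ×ˢ Set.Ioc (0:ℝ) 1,
    Real.log (‖P (Complex.exp (2 * Real.pi * Complex.I * (θ.1 : ℂ)))
      (Complex.exp (2 * Real.pi * Complex.I * (θ.2 : ℂ)))‖)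


open Finset

-- L5: central binomial bound
lemma cb_sq_le (m : ℕ) : (2*m+1) * ((2*m).choose m)^2 ≤ 16^m := by
  induction m with
  | zero => simp
  | succ n ih =>
    have key : (n + 1) * Nat.centralBinom (n + 1) = 2 * (2 * n + 1) * Nat.centralBinom n :=
      Nat.succ_mul_centralBinom_succ n
    have hcb : ∀ j, Nat.centralBinom j = (2*j).choose j := fun j => rfl
    rw [hcb, hcb] at key
    have h1 : (2*(n+1)+1) * ((2*(n+1)).choose (n+1))^2 * (n+1)^2
        = (2*n+3) * (2*(2*n+1))^2 * ((2*n).choose n)^2 := by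
      have hsq : ((2*(n+1)).choose (n+1) * (n+1))^2 = (2*(2*n+1) * (2*n).choose n)^2 := by
        rw [mul_comm ((2*(n+1)).choose (n+1)) (n+1), key]
      nlinarith [hsq]
    have hA : (2*(n+1)+1) * ((2*(n+1)).choose (n+1))^2 * (n+1)^2 ≤ 16^(n+1) * (n+1)^2 := by
      rw [h1]
      calc (2*n+3) * (2*(2*n+1))^2 * ((2*n).choose n)^2
          = ((2*n+1) * ((2*n).choose n)^2) * (4*((2*n+3)*(2*n+1))) := by ring
        _ ≤ 16^n * (4*((2*n+3)*(2*n+1))) := Nat.mul_le_mul_right _ ih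
        _ ≤ 16^n * (16*(n+1)^2) := Nat.mul_le_mul_left _ (by nlinarith)
        _ = 16^(n+1) * (n+1)^2 := by ring
    exact Nat.le_of_mul_le_mul_right hA (by positivity)

-- L1: central binomial as product
lemma cb_prod (m : ℕ) : (((2*m).choose m : ℕ) : ℝ)
    = 4^m * ∏ i ∈ Finset.range m, (2*(i:ℝ)+1)/(2*(i:ℝ)+2) := by
  induction m with
  | zero => simp
  | succ n ih =>
    have key : ((n:ℝ) + 1) * ((2*(n+1)).choose (n+1) : ℕ) = 2 * (2 * n + 1) * ((2*n).choose n : ℕ) := by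
      have := Nat.succ_mul_centralBinom_succ n
      have hcb : ∀ j, Nat.centralBinom j = (2*j).choose j := fun j => rfl
      rw [hcb, hcb] at this
      exact_mod_cast congrArg (fun t : ℕ => (t : ℝ)) this
    have hn1 : ((n:ℝ) + 1) ≠ 0 := by positivity
    rw [Finset.prod_range_succ]
    have h2 : (((2*(n+1)).choose (n+1) : ℕ) : ℝ) = 2 * (2*n+1) * ((2*n).choose n : ℕ) / (n+1) := by
      field_simp at key ⊢; linarith [key]
    rw [h2, ih]
    field_simp
    ring

-- L3: combinatorial identity
lemma comb_id (m i : ℕ) (h : i ≤ m) :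
    (2*m).choose (2*i) * ((2*i).choose i) * ((2*(m-i)).choose (m-i))
      = (2*m).choose m * (m.choose i)^2 := by
  have key : ∀ a b : ℕ, a ≤ b → b.choose a * a.factorial * (b-a).factorial = b.factorial :=
    fun a b hab => Nat.choose_mul_factorial_mul_factorial hab
  have h1 := key i m h
  have h2 := key i (2*i) (by omega)
  have h3 := key (m-i) (2*(m-i)) (by omega)
  have h4 := key m (2*m) (by omega)
  have h5 := key (2*i) (2*m) (by omega)
  have e1 : 2*i - i = i := by omega
  have e2 : 2*(m-i) - (m-i) = m - i := by omega
  have e3 : 2*m - m = m := by omega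
  have e4 : 2*m - 2*i = 2*(m-i) := by omega
  rw [e1] at h2; rw [e2] at h3; rw [e3] at h4; rw [e4] at h5
  -- both sides multiplied by (i! * (m-i)!)^2 equal (2m)!
  have hL : ((2*m).choose (2*i) * ((2*i).choose i) * ((2*(m-i)).choose (m-i)))
      * (i.factorial * (m-i).factorial)^2 = (2*m).factorial := by
    calc ((2*m).choose (2*i) * ((2*i).choose i) * ((2*(m-i)).choose (m-i)))
        * (i.factorial * (m-i).factorial)^2
        = (2*m).choose (2*i) * (((2*i).choose i) * i.factorial * i.factorial)
          * (((2*(m-i)).choose (m-i)) * (m-i).factorial * (m-i).factorial) := by ring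
      _ = (2*m).choose (2*i) * (2*i).factorial * (2*(m-i)).factorial := by rw [h2, h3]
      _ = (2*m).factorial := h5
  have hR : ((2*m).choose m * (m.choose i)^2) * (i.factorial * (m-i).factorial)^2
      = (2*m).factorial := by
    calc ((2*m).choose m * (m.choose i)^2) * (i.factorial * (m-i).factorial)^2
        = (2*m).choose m * ((m.choose i * i.factorial * (m-i).factorial)
          * (m.choose i * i.factorial * (m-i).factorial)) := by ring
      _ = (2*m).choose m * (m.factorial * m.factorial) := by rw [h1]
      _ = (2*m).choose m * m.factorial * m.factorial := by ring
      _ = (2*m).factorial := h4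
  have hpos : 0 < (i.factorial * (m-i).factorial)^2 := by positivity
  exact Nat.eq_of_mul_eq_mul_right hpos (hL.trans hR.symm)

-- L4: sum of squares of binomials
lemma vdm_sq (m : ℕ) : ∑ i ∈ Finset.range (m+1), (m.choose i)^2 = (2*m).choose m := by
  have := Nat.add_choose_eq m m m
  rw [show m + m = 2*m by ring] at this
  rw [this, Finset.Nat.sum_antidiagonal_eq_sum_range_succ (f := fun i j => m.choose i * m.choose j)]
  refine Finset.sum_congr rfl fun i hi => ?_
  simp only [Finset.mem_range] at hi
  rw [sq, Nat.choose_symm (by omega : i ≤ m)]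


open Real Set Finset intervalIntegral MeasureTheory

-- sin^j is periodic with period 2π
lemma sin_pow_periodic (j : ℕ) : Function.Periodic (fun x : ℝ => Real.sin x ^ j) (2*π) :=
  fun x => by simp [Real.sin_periodic x]

lemma integral_sin_pow_two_pi (j : ℕ) :
    (∫ x in (0:ℝ)..(2*π), Real.sin x ^ j)
      = (1 + (-1:ℝ)^j) * ∫ x in (0:ℝ)..π, Real.sin x ^ j := by
  have hInt : ∀ a b : ℝ, IntervalIntegrable (fun x => Real.sin x ^ j) volume a b :=
    fun a b => (continuous_sin.pow j).intervalIntegrable a b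
  have hsplit : (∫ x in (0:ℝ)..(2*π), Real.sin x ^ j)
      = (∫ x in (0:ℝ)..π, Real.sin x ^ j) + ∫ x in π..(2*π), Real.sin x ^ j := by
    rw [integral_add_adjacent_intervals (hInt 0 π) (hInt π (2*π))]
  have hshift : (∫ x in π..(2*π), Real.sin x ^ j)
      = ∫ x in (0:ℝ)..π, Real.sin (x + π) ^ j := by
    rw [intervalIntegral.integral_comp_add_right (fun x => Real.sin x ^ j) π]
    norm_num [two_mul]
  have h2 : (∫ x in (0:ℝ)..π, Real.sin (x + π) ^ j)
      = (-1:ℝ)^j * ∫ x in (0:ℝ)..π, Real.sin x ^ j := by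
    rw [← intervalIntegral.integral_const_mul]
    refine intervalIntegral.integral_congr fun x _ => ?_
    rw [Real.sin_add_pi, neg_pow]
  rw [hsplit, hshift, h2]; ring

lemma integral_cos_pow_two_pi (j : ℕ) :
    (∫ x in (0:ℝ)..(2*π), Real.cos x ^ j)
      = (1 + (-1:ℝ)^j) * ∫ x in (0:ℝ)..π, Real.sin x ^ j := by
  have h1 : (∫ x in (0:ℝ)..(2*π), Real.cos x ^ j)
      = ∫ x in (0:ℝ)..(2*π), Real.sin (x + π/2) ^ j := by
    refine intervalIntegral.integral_congr fun x _ => ?_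
    rw [Real.sin_add_pi_div_two]
  rw [h1, intervalIntegral.integral_comp_add_right (fun x => Real.sin x ^ j) (π/2),
    show (0:ℝ) + π/2 = π/2 by ring, show (2:ℝ)*π + π/2 = π/2 + 2*π by ring,
    (sin_pow_periodic j).intervalIntegral_add_eq (π/2) 0, show (0:ℝ) + 2*π = 2*π by ring]
  exact integral_sin_pow_two_pi j

-- main one-variable computation
lemma J_eval (j : ℕ) :
    (∫ θ in Set.Ioc (0:ℝ) 1, (2 * Real.cos (2 * π * θ)) ^ j)
      = if 2 ∣ j then ((j.choose (j/2) : ℕ) : ℝ) else 0 := by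
  have h2pi : (0:ℝ) < 2*π := by positivity
  have key : (2*π) • (∫ θ in (0:ℝ)..1, (2 * Real.cos (2*π*θ)) ^ j)
      = ∫ u in (0:ℝ)..(2*π), (2 * Real.cos u) ^ j := by
    have := intervalIntegral.smul_integral_comp_mul_left
      (a := 0) (b := 1) (fun u => (2 * Real.cos u) ^ j) (2*π)
    simpa using this
  have hIoc : (∫ θ in Set.Ioc (0:ℝ) 1, (2 * Real.cos (2*π*θ)) ^ j)
      = ∫ θ in (0:ℝ)..1, (2 * Real.cos (2*π*θ)) ^ j :=
    (intervalIntegral.integral_of_le zero_le_one).symm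
  have hval : (∫ u in (0:ℝ)..(2*π), (2 * Real.cos u) ^ j)
      = 2^j * ((1 + (-1:ℝ)^j) * ∫ x in (0:ℝ)..π, Real.sin x ^ j) := by
    rw [← integral_cos_pow_two_pi j, ← intervalIntegral.integral_const_mul]
    refine intervalIntegral.integral_congr fun x _ => ?_
    rw [mul_pow]
  rcases Nat.even_or_odd j with he | ho
  · obtain ⟨q, hq⟩ := he
    have hj : j = 2*q := by omega
    subst hj
    rw [if_pos ⟨q, rfl⟩]
    have hsin := integral_sin_pow_even (n := q)
    have h4 : (2:ℝ)^(2*q) = 4^q := by rw [pow_mul]; norm_num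
    have hneg : (-1:ℝ)^(2*q) = 1 := by rw [pow_mul]; norm_num
    have hchoose : (((2*q).choose ((2*q)/2) : ℕ) : ℝ)
        = 4^q * ∏ i ∈ Finset.range q, (2*(i:ℝ)+1)/(2*(i:ℝ)+2) := by
      rw [show (2*q)/2 = q by omega]
      exact cb_prod q
    have htot : (∫ u in (0:ℝ)..(2*π), (2 * Real.cos u) ^ (2*q))
        = (2*π) * (4^q * ∏ i ∈ Finset.range q, (2*(i:ℝ)+1)/(2*(i:ℝ)+2)) := by
      rw [hval, hsin, hneg, h4]; ring
    have h := key
    rw [htot, smul_eq_mul] at h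
    have hI : (∫ θ in (0:ℝ)..1, (2 * Real.cos (2*π*θ)) ^ (2*q))
        = 4^q * ∏ i ∈ Finset.range q, (2*(i:ℝ)+1)/(2*(i:ℝ)+2) :=
      mul_left_cancel₀ (ne_of_gt h2pi) h
    rw [hIoc, hI, hchoose]
  · obtain ⟨t, ht⟩ := ho
    rw [if_neg (by omega : ¬ 2 ∣ j), hIoc]
    have hneg : (-1:ℝ)^j = -1 := Odd.neg_one_pow ⟨t, ht⟩
    have hz : (∫ u in (0:ℝ)..(2*π), (2 * Real.cos u) ^ j) = 0 := by
      rw [hval, hneg]; ring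
    have h := key
    rw [hz] at h
    have : (2*π) * (∫ θ in (0:ℝ)..1, (2 * Real.cos (2*π*θ)) ^ j) = 0 := by
      simpa [smul_eq_mul] using h
    rcases mul_eq_zero.mp this with h' | h'
    · exact absurd h' (by positivity)
    · exact h'


open Real Set Finset intervalIntegral MeasureTheory

noncomputable def μ01 : Measure ℝ := volume.restrict (Set.Ioc (0:ℝ) 1)

instance : IsProbabilityMeasure μ01 :=
  ⟨by rw [μ01, Measure.restrict_apply_univ, Real.volume_Ioc]; norm_num⟩

noncomputable def μ2 : Measure (ℝ × ℝ) := μ01.prod μ01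

instance : IsProbabilityMeasure μ2 := by
  rw [μ2]; infer_instance

noncomputable def XX (p : ℝ × ℝ) : ℝ := 2 * Real.cos (2*π*p.1) + 2 * Real.cos (2*π*p.2)

lemma continuous_XX : Continuous XX := by
  unfold XX; fun_prop

lemma abs_XX_le (p : ℝ × ℝ) : |XX p| ≤ 4 := by
  unfold XX
  have h1 := Real.neg_one_le_cos (2*π*p.1)
  have h2 := Real.cos_le_one (2*π*p.1)
  have h3 := Real.neg_one_le_cos (2*π*p.2)
  have h4 := Real.cos_le_one (2*π*p.2)
  rw [abs_le]; constructor <;> linarith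

lemma integrable_bdd {f : ℝ × ℝ → ℝ} (hf : Measurable f) (C : ℝ)
    (hC : ∀ p, |f p| ≤ C) : Integrable f μ2 := by
  apply Integrable.mono' (integrable_const C) hf.aestronglyMeasurable
  filter_upwards with p using by rw [Real.norm_eq_abs]; exact hC p

lemma cos_int_eval (j : ℕ) :
    (∫ θ, (2 * Real.cos (2 * π * θ)) ^ j ∂μ01)
      = if 2 ∣ j then ((j.choose (j/2) : ℕ) : ℝ) else 0 := J_eval j

-- the even-index Nat sum identity
lemma nat_sum_id (q : ℕ) :
    ∑ i ∈ Finset.range (q+1), (2*q).choose (2*i) * ((2*i).choose i) * ((2*(q-i)).choose (q-i))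
      = ((2*q).choose q)^2 := by
  have : ∀ i ∈ Finset.range (q+1),
      (2*q).choose (2*i) * ((2*i).choose i) * ((2*(q-i)).choose (q-i))
        = (2*q).choose q * (q.choose i)^2 := fun i hi =>
    comb_id q i (by simpa using Nat.lt_succ_iff.mp (Finset.mem_range.mp hi))
  rw [Finset.sum_congr rfl this, ← Finset.mul_sum, vdm_sq, sq]

lemma XX_moment (m : ℕ) :
    (∫ p, XX p ^ m ∂μ2)
      = if 2 ∣ m then (((m.choose (m/2) : ℕ) : ℝ))^2 else 0 := by
  have hexp : ∀ p : ℝ × ℝ, XX p ^ m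
      = ∑ j ∈ Finset.range (m+1),
          (2 * Real.cos (2*π*p.1))^j * (2 * Real.cos (2*π*p.2))^(m-j) * (m.choose j : ℝ) := by
    intro p; rw [XX, add_pow]
  have hmeas : ∀ j, Measurable (fun p : ℝ × ℝ =>
      (2 * Real.cos (2*π*p.1))^j * (2 * Real.cos (2*π*p.2))^(m-j) * (m.choose j : ℝ)) := by
    intro j
    apply Measurable.mul _ measurable_const
    apply Measurable.mul <;> fun_prop
  have hint : ∀ j, Integrable (fun p : ℝ × ℝ =>
      (2 * Real.cos (2*π*p.1))^j * (2 * Real.cos (2*π*p.2))^(m-j) * (m.choose j : ℝ)) μ2 := by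
    intro j
    refine integrable_bdd (hmeas j) (2^j * 2^(m-j) * (m.choose j : ℝ)) fun p => ?_
    rw [abs_mul, abs_mul]
    have habs : ∀ t : ℝ, |2 * Real.cos t| ≤ 2 := fun t => by
      rw [abs_mul, abs_two]
      nlinarith [Real.abs_cos_le_one t, abs_nonneg (Real.cos t)]
    have b1 : |(2 * Real.cos (2*π*p.1))^j| ≤ 2^j := by
      rw [abs_pow]
      exact pow_le_pow_left₀ (abs_nonneg _) (habs _) j
    have b2 : |(2 * Real.cos (2*π*p.2))^(m-j)| ≤ 2^(m-j) := by
      rw [abs_pow]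
      exact pow_le_pow_left₀ (abs_nonneg _) (habs _) (m-j)
    have b3 : |(m.choose j : ℝ)| = (m.choose j : ℝ) := abs_of_nonneg (by positivity)
    rw [b3]
    apply mul_le_mul_of_nonneg_right _ (by positivity)
    calc |(2 * Real.cos (2*π*p.1))^j| * |(2 * Real.cos (2*π*p.2))^(m-j)|
        ≤ 2^j * |(2 * Real.cos (2*π*p.2))^(m-j)| :=
          mul_le_mul_of_nonneg_right b1 (abs_nonneg _)
      _ ≤ 2^j * 2^(m-j) := mul_le_mul_of_nonneg_left b2 (by positivity)
  have h1 : (∫ p, XX p ^ m ∂μ2)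
      = ∑ j ∈ Finset.range (m+1), ∫ p : ℝ × ℝ,
          (2 * Real.cos (2*π*p.1))^j * (2 * Real.cos (2*π*p.2))^(m-j) * (m.choose j : ℝ) ∂μ2 := by
    rw [show (fun p => XX p ^ m) = fun p => ∑ j ∈ Finset.range (m+1),
          (2 * Real.cos (2*π*p.1))^j * (2 * Real.cos (2*π*p.2))^(m-j) * (m.choose j : ℝ)
       from funext hexp]
    exact integral_finset_sum _ fun j _ => hint j
  have h2 : ∀ j, (∫ p : ℝ × ℝ,
      (2 * Real.cos (2*π*p.1))^j * (2 * Real.cos (2*π*p.2))^(m-j) * (m.choose j : ℝ) ∂μ2)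
      = (m.choose j : ℝ) * ((if 2 ∣ j then ((j.choose (j/2) : ℕ) : ℝ) else 0)
          * (if 2 ∣ (m-j) then (((m-j).choose ((m-j)/2) : ℕ) : ℝ) else 0)) := by
    intro j
    rw [MeasureTheory.integral_mul_const]
    have hpm : (∫ p : ℝ × ℝ, (2 * Real.cos (2*π*p.1))^j * (2 * Real.cos (2*π*p.2))^(m-j) ∂μ2)
        = (∫ θ, (2 * Real.cos (2*π*θ))^j ∂μ01) * ∫ θ, (2 * Real.cos (2*π*θ))^(m-j) ∂μ01 :=
      MeasureTheory.integral_prod_mul (fun θ : ℝ => (2 * Real.cos (2*π*θ))^j)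
        (fun θ : ℝ => (2 * Real.cos (2*π*θ))^(m-j))
    rw [hpm, cos_int_eval, cos_int_eval]
    ring
  rw [h1, Finset.sum_congr rfl (fun j _ => h2 j)]
  rcases Nat.even_or_odd m with ⟨q, hq⟩ | ⟨q, hq⟩
  · have hm : m = 2*q := by omega
    subst hm
    rw [if_pos ⟨q, rfl⟩]
    have himg : (Finset.range (q+1)).image (fun i => 2*i) ⊆ Finset.range (2*q+1) := by
      intro j hj
      simp only [Finset.mem_image, Finset.mem_range] at hj ⊢
      obtain ⟨i, hi, rfl⟩ := hj; omega
    rw [← Finset.sum_subset himg]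
    · rw [Finset.sum_image (fun a _ b _ h => by omega)]
      have : ∀ i ∈ Finset.range (q+1),
          ((2*q).choose (2*i) : ℝ) * ((if 2 ∣ 2*i then (((2*i).choose ((2*i)/2) : ℕ) : ℝ) else 0)
            * (if 2 ∣ (2*q-2*i) then (((2*q-2*i).choose ((2*q-2*i)/2) : ℕ) : ℝ) else 0))
          = (((2*q).choose (2*i) * ((2*i).choose i) * ((2*(q-i)).choose (q-i)) : ℕ) : ℝ) := by
        intro i hi
        rw [Finset.mem_range] at hi
        rw [if_pos ⟨i, rfl⟩, if_pos ⟨q - i, by omega⟩]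
        rw [show (2*i)/2 = i by omega, show 2*q - 2*i = 2*(q-i) by omega,
          show (2*(q-i))/2 = q - i by omega]
        push_cast; ring
      rw [Finset.sum_congr rfl this, ← Nat.cast_sum, nat_sum_id,
        show (2*q)/2 = q by omega]
      push_cast; ring
    · intro j hjr hjni
      have hodd : ¬ (2 ∣ j) := by
        intro ⟨i, hi⟩
        apply hjni
        simp only [Finset.mem_image, Finset.mem_range]
        rw [Finset.mem_range] at hjr
        exact ⟨i, by omega, by omega⟩
      rw [if_neg hodd]
      ring
  · rw [if_neg (by omega : ¬ 2 ∣ m)]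
    apply Finset.sum_eq_zero
    intro j hj
    rcases Nat.even_or_odd j with ⟨i, hi⟩ | ⟨i, hi⟩
    · rw [Finset.mem_range] at hj
      rw [if_neg (by omega : ¬ 2 ∣ (m - j))]
      ring
    · rw [if_neg (by omega : ¬ 2 ∣ j)]
      ring


open Real Set Finset intervalIntegral MeasureTheory

section K

variable {k : ℝ}

lemma ratio_abs_le (hk : 4 ≤ k) (p : ℝ × ℝ) : |XX p / k| ≤ 1 := by
  have hk0 : (0:ℝ) < k := by linarith
  rw [abs_div, abs_of_pos hk0, div_le_one hk0]
  linarith [abs_XX_le p]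

-- moments of X/k
lemma ratio_moment (hk : 4 ≤ k) (m : ℕ) :
    (∫ p, (XX p / k)^m ∂μ2)
      = if 2 ∣ m then (((m.choose (m/2) : ℕ) : ℝ))^2 / k^m else 0 := by
  have hk0 : (0:ℝ) < k := by linarith
  have : (fun p => (XX p / k)^m) = fun p => XX p ^ m * (k^m)⁻¹ := by
    funext p; rw [div_pow, div_eq_mul_inv]
  rw [this, MeasureTheory.integral_mul_const, XX_moment]
  split_ifs with h
  · rw [div_eq_mul_inv]
  · ring

noncomputable def FF (k : ℝ) (n : ℕ) (p : ℝ × ℝ) : ℝ := (XX p / k)^(n+1) / ((n:ℝ)+1)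

lemma FF_measurable (n : ℕ) : Measurable (FF k n) := by
  unfold FF XX; fun_prop

lemma FF_integrable (hk : 4 ≤ k) (n : ℕ) : Integrable (FF k n) μ2 := by
  refine integrable_bdd (FF_measurable n) 1 fun p => ?_
  unfold FF
  rw [abs_div, abs_pow]
  have h1 : |XX p / k| ^ (n+1) ≤ 1 := pow_le_one₀ (abs_nonneg _) (ratio_abs_le hk p)
  have h2 : (1:ℝ) ≤ |((n:ℝ)+1)| := by
    rw [abs_of_pos (by positivity)]
    simp
  rw [div_le_one (lt_of_lt_of_le one_pos h2)]
  exact h1.trans h2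

lemma moment_bound (hk : 4 ≤ k) (q : ℕ) :
    (∫ p, (XX p / k)^(2*q) ∂μ2) ≤ (2*(q:ℝ)+1)⁻¹ := by
  have hk0 : (0:ℝ) < k := by linarith
  rw [ratio_moment hk, if_pos ⟨q, rfl⟩, show (2*q)/2 = q by omega]
  have hnat : ((2*q+1) * ((2*q).choose q)^2 : ℕ) ≤ 16^q := cb_sq_le q
  have hr : ((2*(q:ℝ)+1)) * (((2*q).choose q : ℕ) : ℝ)^2 ≤ 16^q := by exact_mod_cast hnat
  have hk2 : (16:ℝ)^q ≤ k^(2*q) := by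
    rw [pow_mul]
    apply pow_le_pow_left₀ (by norm_num)
    nlinarith
  have key : (((2*q).choose q : ℕ) : ℝ)^2 * (2*(q:ℝ)+1) ≤ k^(2*q) := by nlinarith
  rw [div_le_iff₀ (by positivity : (0:ℝ) < k^(2*q)), inv_mul_eq_div,
    le_div_iff₀ (by positivity : (0:ℝ) < 2*(q:ℝ)+1)]
  linarith

end K


open Real Set Finset intervalIntegral MeasureTheory

section K2

variable {k : ℝ}

lemma even_pow_integrable (hk : 4 ≤ k) (m : ℕ) :
    Integrable (fun p => (XX p / k)^m) μ2 := by
  refine integrable_bdd (by unfold XX; fun_prop) 1 fun p => ?_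
  rw [abs_pow]
  exact pow_le_one₀ (abs_nonneg _) (ratio_abs_le hk p)

lemma FF_norm_integral_le (hk : 4 ≤ k) (n : ℕ) :
    (∫ p, ‖FF k n p‖ ∂μ2) ≤ (((n:ℝ)+1)⁻¹)^2 := by
  set q := (n+1)/2 with hq
  have hq1 : 2*q ≤ n+1 := by omega
  have hq2 : n+1 ≤ 2*q+1 := by omega
  have hpt : ∀ p, ‖FF k n p‖ ≤ (XX p / k)^(2*q) / ((n:ℝ)+1) := by
    intro p
    unfold FF
    rw [Real.norm_eq_abs, abs_div, abs_of_pos (by positivity : (0:ℝ) < (n:ℝ)+1)]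
    rw [div_le_div_iff_of_pos_right (by positivity : (0:ℝ) < (n:ℝ)+1), abs_pow]
    calc |XX p / k| ^ (n+1) ≤ |XX p / k| ^ (2*q) :=
          pow_le_pow_of_le_one (abs_nonneg _) (ratio_abs_le hk p) hq1
      _ = (XX p / k) ^ (2*q) := Even.pow_abs (even_two_mul q) _
  have hint : (∫ p, ‖FF k n p‖ ∂μ2) ≤ ∫ p, (XX p / k)^(2*q) / ((n:ℝ)+1) ∂μ2 := by
    apply integral_mono ((FF_integrable hk n).norm) _ hpt
    exact (even_pow_integrable hk (2*q)).div_const _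
  have hval : (∫ p, (XX p / k)^(2*q) / ((n:ℝ)+1) ∂μ2)
      = (∫ p, (XX p / k)^(2*q) ∂μ2) / ((n:ℝ)+1) := integral_div _ _
  have h2 : (∫ p, (XX p / k)^(2*q) ∂μ2) / ((n:ℝ)+1) ≤ (2*(q:ℝ)+1)⁻¹ / ((n:ℝ)+1) :=
    (div_le_div_iff_of_pos_right (by positivity)).mpr (moment_bound hk q)
  have h3 : (2*(q:ℝ)+1)⁻¹ / ((n:ℝ)+1) ≤ (((n:ℝ)+1)⁻¹)^2 := by
    have hcast : ((n:ℝ)+1) ≤ 2*(q:ℝ)+1 := by exact_mod_cast hq2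
    rw [sq, div_eq_mul_inv]
    apply mul_le_mul_of_nonneg_right _ (by positivity)
    exact inv_anti₀ (by positivity) hcast
  linarith [hint, h2, h3, hval.le, hval.ge]

-- explicit value of ∫ FF
noncomputable def aa (k : ℝ) (n : ℕ) : ℝ :=
  if 2 ∣ (n+1) then (((n+1).choose ((n+1)/2) : ℕ) : ℝ)^2 / k^(n+1) / ((n:ℝ)+1) else 0

lemma FF_integral_eq (hk : 4 ≤ k) (n : ℕ) : (∫ p, FF k n p ∂μ2) = aa k n := by
  unfold FF aa
  rw [show (fun p => (XX p / k)^(n+1) / ((n:ℝ)+1))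
      = fun p => (XX p / k)^(n+1) * (((n:ℝ)+1))⁻¹ from funext fun p => div_eq_mul_inv _ _]
  rw [MeasureTheory.integral_mul_const, ratio_moment hk]
  split_ifs with h
  · rw [div_eq_mul_inv, div_eq_mul_inv]
  · ring

lemma aa_summable (hk : 4 ≤ k) : Summable (aa k) := by
  have hs : Summable (fun n : ℕ => (((n:ℝ)+1)⁻¹)^2) := by
    have hs0 : Summable (fun n : ℕ => 1 / ((n:ℝ))^2) :=
      Real.summable_one_div_nat_pow.mpr one_lt_two
    have hsh := (summable_nat_add_iff 1).mpr hs0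
    apply hsh.congr
    intro n
    push_cast
    rw [one_div, ← inv_pow]
  refine Summable.of_norm_bounded hs fun n => ?_
  · rw [← FF_integral_eq hk n, Real.norm_eq_abs]
    calc |∫ p, FF k n p ∂μ2| ≤ ∫ p, ‖FF k n p‖ ∂μ2 := by
          rw [← Real.norm_eq_abs]; exact norm_integral_le_integral_norm _
      _ ≤ (((n:ℝ)+1)⁻¹)^2 := FF_norm_integral_le hk n

end K2


open Real Set Finset intervalIntegral MeasureTheory

noncomputable def GG (k : ℝ) : ℕ → (ℝ × ℝ) → ℝ
  | 0 => fun _ => Real.log k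
  | (m+1) => fun p => -FF k m p

section K3

variable {k : ℝ}

lemma halfint_null : (volume : Measure ℝ) {x : ℝ | ∃ n : ℤ, x = n/2} = 0 := by
  have he : {x : ℝ | ∃ n : ℤ, x = n/2} = Set.range (fun n : ℤ => (n:ℝ)/2) := by
    ext x; simp [Set.mem_setOf_eq, eq_comm]
  rw [he]
  exact (Set.countable_range _).measure_zero _

lemma ae_abs_lt (hk : 4 ≤ k) : ∀ᵐ p ∂μ2, |XX p| < k := by
  have hSmeas : MeasurableSet {x : ℝ | ∃ n : ℤ, x = n/2} := by
    have he : {x : ℝ | ∃ n : ℤ, x = n/2} = Set.range (fun n : ℤ => (n:ℝ)/2) := by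
      ext x; simp [Set.mem_setOf_eq, eq_comm]
    rw [he]
    exact (Set.countable_range _).measurableSet
  have hsub : {p : ℝ × ℝ | ¬ |XX p| < k}
      ⊆ {x : ℝ | ∃ n : ℤ, x = n/2} ×ˢ (Set.univ : Set ℝ) := by
    intro p hp
    simp only [Set.mem_setOf_eq, not_lt] at hp
    have hc1 : |Real.cos (2*π*p.1)| ≤ 1 := Real.abs_cos_le_one _
    have hc2 : |Real.cos (2*π*p.2)| ≤ 1 := Real.abs_cos_le_one _
    have habs : |XX p| ≤ |2 * Real.cos (2*π*p.1)| + |2 * Real.cos (2*π*p.2)| := abs_add_le _ _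
    rw [abs_mul, abs_two] at habs
    rw [show |(2:ℝ) * Real.cos (2*π*p.2)| = |2| * |Real.cos (2*π*p.2)| from abs_mul _ _,
      abs_two] at habs
    have hcos1 : |Real.cos (2*π*p.1)| = 1 := by
      apply le_antisymm hc1
      nlinarith
    have hsin : Real.sin (2*π*p.1) = 0 := by
      have hsq := Real.sin_sq_add_cos_sq (2*π*p.1)
      have : Real.cos (2*π*p.1)^2 = 1 := by
        rw [← sq_abs, hcos1]; norm_num
      nlinarith [this]
    obtain ⟨n, hn⟩ := Real.sin_eq_zero_iff.mp hsin
    have hπ : (π:ℝ) ≠ 0 := Real.pi_ne_zero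
    have hn' : (n:ℝ) = 2 * p.1 := by
      have h2 : (n:ℝ) * π = (2 * p.1) * π := by rw [hn]; ring
      exact mul_right_cancel₀ hπ h2
    exact ⟨⟨n, by rw [hn']; ring⟩, trivial⟩
  rw [ae_iff]
  apply measure_mono_null hsub
  have h01 : μ01 {x : ℝ | ∃ n : ℤ, x = n/2} = 0 := by
    rw [μ01, Measure.restrict_apply hSmeas]
    exact measure_mono_null Set.inter_subset_left halfint_null
  rw [μ2, Measure.prod_prod, h01, zero_mul]

lemma GG_integrable (hk : 4 ≤ k) (n : ℕ) : Integrable (GG k n) μ2 := by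
  cases n with
  | zero => exact integrable_const _
  | succ m => exact (FF_integrable hk m).neg

lemma GG_norm_summable (hk : 4 ≤ k) :
    Summable (fun n => ∫ p, ‖GG k n p‖ ∂μ2) := by
  apply (summable_nat_add_iff 1).mp
  have hcongr : ∀ n : ℕ, (∫ p, ‖GG k (n+1) p‖ ∂μ2) = ∫ p, ‖FF k n p‖ ∂μ2 := by
    intro n
    congr 1
    funext p
    show ‖-FF k n p‖ = ‖FF k n p‖
    exact norm_neg _
  have hs : Summable (fun n : ℕ => (((n:ℝ)+1)⁻¹)^2) := by
    have hs0 : Summable (fun n : ℕ => 1 / ((n:ℝ))^2) :=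
      Real.summable_one_div_nat_pow.mpr one_lt_two
    have hsh := (summable_nat_add_iff 1).mpr hs0
    apply hsh.congr
    intro n
    push_cast
    rw [one_div, ← inv_pow]
  apply Summable.of_nonneg_of_le (fun n => integral_nonneg fun p => norm_nonneg _)
    (fun n => ?_) hs
  rw [hcongr n]
  exact FF_norm_integral_le hk n

lemma GG_tsum_ae (hk : 4 ≤ k) :
    ∀ᵐ p ∂μ2, (∑' n, GG k n p) = Real.log (k - XX p) := by
  have hk0 : (0:ℝ) < k := by linarith
  filter_upwards [ae_abs_lt hk] with p hp
  have hx : |XX p / k| < 1 := by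
    rw [abs_div, abs_of_pos hk0, div_lt_one hk0]
    exact hp
  have hhs : HasSum (fun n => FF k n p) (-Real.log (1 - XX p / k)) := by
    have := Real.hasSum_pow_div_log_of_abs_lt_one hx
    exact this
  have hGsummable : Summable (fun n => GG k n p) := by
    apply (summable_nat_add_iff 1).mp
    have : (fun n : ℕ => GG k (n+1) p) = fun n => -FF k n p := rfl
    rw [this]
    exact hhs.summable.neg
  rw [Summable.tsum_eq_zero_add hGsummable]
  have h0 : GG k 0 p = Real.log k := rfl
  have h1 : (∑' n, GG k (n+1) p) = Real.log (1 - XX p / k) := by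
    have : HasSum (fun n => GG k (n+1) p) (Real.log (1 - XX p / k)) := by
      have := hhs.neg
      simp only [neg_neg] at this
      exact this
    exact this.tsum_eq
  rw [h0, h1]
  have hpos : (0:ℝ) < 1 - XX p / k := by
    have := (abs_lt.mp hx).2
    linarith
  rw [← Real.log_mul (ne_of_gt hk0) (ne_of_gt hpos)]
  congr 1
  field_simp

lemma key_integral (hk : 4 ≤ k) :
    (∫ p, Real.log (k - XX p) ∂μ2) = Real.log k - ∑' n, aa k n := by
  have hmain : HasSum (fun n => ∫ p, GG k n p ∂μ2) (∫ p, (∑' n, GG k n p) ∂μ2) :=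
    hasSum_integral_of_summable_integral_norm (GG_integrable hk) (GG_norm_summable hk)
  have hcongr : (∫ p, (∑' n, GG k n p) ∂μ2) = ∫ p, Real.log (k - XX p) ∂μ2 :=
    integral_congr_ae (GG_tsum_ae hk)
  have h0 : (∫ p, GG k 0 p ∂μ2) = Real.log k := by
    show (∫ _p : ℝ × ℝ, Real.log k ∂μ2) = Real.log k
    rw [MeasureTheory.integral_const]
    simp
  have hsucc : ∀ n, (∫ p, GG k (n+1) p ∂μ2) = -(aa k n) := by
    intro n
    show (∫ p, -FF k n p ∂μ2) = -(aa k n)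
    rw [MeasureTheory.integral_neg, FF_integral_eq hk n]
  have hfun : (fun n => ∫ p, GG k (n+1) p ∂μ2) = fun n => -(aa k n) := funext hsucc
  have hA : HasSum (fun n => ∫ p, GG k (n+1) p ∂μ2) (-∑' n, aa k n) := by
    rw [hfun]
    exact ((aa_summable hk).hasSum).neg
  have hB : HasSum (fun n => ∫ p, GG k n p ∂μ2)
      ((-∑' n, aa k n) + ∑ i ∈ Finset.range 1, ∫ p, GG k i p ∂μ2) :=
    (hasSum_nat_add_iff 1).mp hA
  have hval : ((-∑' n, aa k n) + ∑ i ∈ Finset.range 1, ∫ p, GG k i p ∂μ2)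
      = Real.log k - ∑' n, aa k n := by
    rw [Finset.sum_range_one, h0]
    ring
  calc (∫ p, Real.log (k - XX p) ∂μ2) = ∫ p, (∑' n, GG k n p) ∂μ2 := hcongr.symm
    _ = Real.log k - ∑' n, aa k n := hmain.unique (hval ▸ hB)

end K3


open Real Set Finset intervalIntegral MeasureTheory

lemma exp_add_inv (θ : ℝ) :
    Complex.exp (2*(π:ℂ)*Complex.I*(θ:ℂ)) + (Complex.exp (2*(π:ℂ)*Complex.I*(θ:ℂ)))⁻¹
      = ((2 * Real.cos (2*π*θ) : ℝ) : ℂ) := by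
  have harg : (2*(π:ℂ)*Complex.I*(θ:ℂ)) = ((2*π*θ : ℝ) : ℂ) * Complex.I := by
    push_cast; ring
  rw [harg, ← Complex.exp_neg, ← neg_mul, Complex.exp_mul_I, Complex.exp_mul_I,
    Complex.cos_neg, Complex.sin_neg]
  push_cast
  ring

section K4

variable {k : ℝ}

lemma abs_P (hk : 4 ≤ k) (p : ℝ × ℝ) :
    ‖(k:ℂ) - Complex.exp (2*(π:ℂ)*Complex.I*(p.1:ℂ))
        - (Complex.exp (2*(π:ℂ)*Complex.I*(p.1:ℂ)))⁻¹
        - Complex.exp (2*(π:ℂ)*Complex.I*(p.2:ℂ))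
        - (Complex.exp (2*(π:ℂ)*Complex.I*(p.2:ℂ)))⁻¹‖
      = k - XX p := by
  have h1 := exp_add_inv p.1
  have h2 := exp_add_inv p.2
  have he : (k:ℂ) - Complex.exp (2*(π:ℂ)*Complex.I*(p.1:ℂ))
        - (Complex.exp (2*(π:ℂ)*Complex.I*(p.1:ℂ)))⁻¹
        - Complex.exp (2*(π:ℂ)*Complex.I*(p.2:ℂ))
        - (Complex.exp (2*(π:ℂ)*Complex.I*(p.2:ℂ)))⁻¹
      = (k:ℂ) - (Complex.exp (2*(π:ℂ)*Complex.I*(p.1:ℂ))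
          + (Complex.exp (2*(π:ℂ)*Complex.I*(p.1:ℂ)))⁻¹)
        - (Complex.exp (2*(π:ℂ)*Complex.I*(p.2:ℂ))
          + (Complex.exp (2*(π:ℂ)*Complex.I*(p.2:ℂ)))⁻¹) := by ring
  rw [he, h1, h2, show (k:ℂ) - ((2 * Real.cos (2*π*p.1) : ℝ) : ℂ)
      - ((2 * Real.cos (2*π*p.2) : ℝ) : ℂ) = ((k - XX p : ℝ) : ℂ) by unfold XX; push_cast; ring]
  rw [Complex.norm_real, Real.norm_eq_abs, abs_of_nonneg]
  have := abs_XX_le p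
  have := abs_le.mp this
  linarith [this.2]

lemma μ2_eq_restrict :
    μ2 = (volume : Measure (ℝ × ℝ)).restrict (Set.Ioc (0:ℝ) 1 ×ˢ Set.Ioc (0:ℝ) 1) := by
  rw [μ2, μ01, Measure.prod_restrict, ← MeasureTheory.Measure.volume_eq_prod]

lemma aa_tsum_eq (hk : 4 ≤ k) :
    (∑' n, aa k n) = ∑' n : ℕ, ((2 * (n + 1)).choose (n + 1) : ℝ) ^ 2 *
          k ^ (-(2 * ((n : ℤ) + 1))) / (2 * ((n : ℝ) + 1)) := by
  have hk0 : (0:ℝ) < k := by linarith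
  have hinj : Function.Injective (fun m : ℕ => 2*m+1) := by
    intro a b h
    have h' : 2*a+1 = 2*b+1 := h
    omega
  have hsupp : Function.support (aa k) ⊆ Set.range (fun m : ℕ => 2*m+1) := by
    intro n hn
    rcases Nat.even_or_odd n with ⟨t, ht⟩ | ⟨t, ht⟩
    · exfalso
      apply hn
      unfold aa
      rw [if_neg (by omega : ¬ 2 ∣ (n+1))]
    · exact ⟨t, show 2*t+1 = n by omega⟩
  rw [← Function.Injective.tsum_eq hinj hsupp]
  apply tsum_congr
  intro m
  show aa k (2*m+1) = _
  unfold aa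
  rw [if_pos ⟨m+1, by ring⟩, show (2*m+1+1) = 2*(m+1) by ring,
    show (2*(m+1))/2 = m+1 by omega]
  have hzpow : k ^ (-(2 * ((m:ℤ) + 1))) = (k ^ (2*(m+1) : ℕ))⁻¹ := by
    rw [show (-(2 * ((m:ℤ) + 1))) = -((2*(m+1) : ℕ) : ℤ) by push_cast; ring,
      zpow_neg, zpow_natCast]
  rw [hzpow]
  have hden : ((2*m+1 : ℕ) : ℝ) + 1 = 2*((m:ℝ)+1) := by push_cast; ring
  rw [hden]
  ring

end K4



/-- For real `k ≥ 4`,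
`m(k − z − z⁻¹ − w − w⁻¹) = log k − Σ_{n≥1} C(2n,n)² k^{-2n}/(2n)`. -/
theorem mahlerMeasure_F0 (k : ℝ) (hk : 4 ≤ k) :
    mahlerMeasure2 (fun z w => (k : ℂ) - z - z⁻¹ - w - w⁻¹) =
      Real.log k -
        ∑' n : ℕ, ((2 * (n + 1)).choose (n + 1) : ℝ) ^ 2 *
          k ^ (-(2 * ((n : ℤ) + 1))) / (2 * ((n : ℝ) + 1)) := by
  have hred : mahlerMeasure2 (fun z w => (k : ℂ) - z - z⁻¹ - w - w⁻¹)
      = ∫ p, Real.log (k - XX p) ∂μ2 := by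
    rw [mahlerMeasure2, μ2_eq_restrict]
    apply MeasureTheory.integral_congr_ae
    apply Filter.Eventually.of_forall
    intro p
    exact congrArg Real.log (abs_P hk p)
  rw [hred, key_integral hk, aa_tsum_eq hk]
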